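/- Let Q : [0, 1] → ℝ be Lipschitz continuous and let β ∈ C²([0, 1]) be the unique solution of β″(s) + (3/s)β′(s) + Q(s)β(s) = 0 on (0, 1] with β(0) = 1, β′(0) = 0. Then every θ ∈ C²([0, 1]) satisfying θ″(s) + (3/s)θ′(s) + Q(s)θ(s) = 0 for all s ∈ (0, 1] and θ′(0) = 0 is a scalar multiple of β; more precisely, θ = θ(0) · β. -/

import Mathlib

open Set intervalIntegral

/-- `β` (with first and second derivative functions `β₁`, `β₂`) is a `C²` solution on `[0, 1]`
of the singular linear ODE `β'' + (3/s) β' + Q β = 0` on `(0, 1]`. -/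
def IsSingularLinearSol (Q : ℝ → ℝ) (β β₁ β₂ : ℝ → ℝ) : Prop :=
  (∀ s ∈ Icc (0:ℝ) 1, HasDerivWithinAt β (β₁ s) (Icc 0 1) s) ∧
  (∀ s ∈ Icc (0:ℝ) 1, HasDerivWithinAt β₁ (β₂ s) (Icc 0 1) s) ∧
  ContinuousOn β₂ (Icc 0 1) ∧
  ∀ s ∈ Ioc (0:ℝ) 1, β₂ s + (3 / s) * β₁ s + Q s * β s = 0

theorem key_vanish
    (Q : ℝ → ℝ) (hQ : ∃ K, LipschitzOnWith K Q (Icc 0 1))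
    (w w₁ w₂ : ℝ → ℝ)
    (hwd : ∀ s ∈ Icc (0:ℝ) 1, HasDerivWithinAt w (w₁ s) (Icc 0 1) s)
    (hw₁d : ∀ s ∈ Icc (0:ℝ) 1, HasDerivWithinAt w₁ (w₂ s) (Icc 0 1) s)
    (hode : ∀ s ∈ Ioc (0:ℝ) 1, w₂ s + (3 / s) * w₁ s + Q s * w s = 0)
    (hw0 : w 0 = 0) (hw₁0 : w₁ 0 = 0) :
    ∀ s ∈ Icc (0:ℝ) 1, w s = 0 := by
  obtain ⟨K, hQK⟩ := hQ
  have hQc : ContinuousOn Q (Icc 0 1) := hQK.continuousOn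
  have hwc : ContinuousOn w (Icc 0 1) := fun s hs => (hwd s hs).continuousWithinAt
  have hw₁c : ContinuousOn w₁ (Icc 0 1) := fun s hs => (hw₁d s hs).continuousWithinAt
  obtain ⟨M, hM⟩ := isCompact_Icc.exists_bound_of_continuousOn hQc
  obtain ⟨C, hC⟩ := isCompact_Icc.exists_bound_of_continuousOn hwc
  simp only [Real.norm_eq_abs] at hM hC
  have hM0 : 0 ≤ M := le_trans (abs_nonneg _) (hM 0 (by norm_num))
  have hC0 : 0 ≤ C := le_trans (abs_nonneg _) (hC 0 (by norm_num))
  -- FTC helper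
  have ftc : ∀ (f f' : ℝ → ℝ), (∀ x ∈ Icc (0:ℝ) 1, HasDerivWithinAt f (f' x) (Icc 0 1) x) →
      ContinuousOn f' (Icc 0 1) → ∀ s ∈ Icc (0:ℝ) 1, ∫ t in (0:ℝ)..s, f' t = f s - f 0 := by
    intro f f' hf hf' s hs
    have hfc : ContinuousOn f (Icc 0 1) := fun x hx => (hf x hx).continuousWithinAt
    apply integral_eq_sub_of_hasDeriv_right_of_le hs.1
    · exact hfc.mono (Icc_subset_Icc le_rfl hs.2)
    · intro x hx
      have hx1 : x ∈ Ioo (0:ℝ) 1 := ⟨hx.1, lt_of_lt_of_le hx.2 hs.2⟩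
      exact ((hf x ⟨hx1.1.le, hx1.2.le⟩).hasDerivAt
        (Icc_mem_nhds hx1.1 hx1.2)).hasDerivWithinAt
    · exact (hf'.mono (Icc_subset_Icc le_rfl hs.2)).intervalIntegrable_of_Icc hs.1
  -- the derivative of g s = s^3 * w₁ s
  set G : ℝ → ℝ := fun s => -(s ^ 3 * Q s * w s) with hG
  have hGc : ContinuousOn G (Icc 0 1) := (((continuousOn_pow 3).mul hQc).mul hwc).neg
  have hgd : ∀ s ∈ Icc (0:ℝ) 1, HasDerivWithinAt (fun s => s ^ 3 * w₁ s) (G s) (Icc 0 1) s := by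
    intro s hs
    have h1 : HasDerivWithinAt (fun s : ℝ => s ^ 3 * w₁ s)
        (3 * s ^ 2 * w₁ s + s ^ 3 * w₂ s) (Icc 0 1) s := by
      have h := ((hasDerivAt_pow 3 s).hasDerivWithinAt (s := Icc (0:ℝ) 1)).fun_mul (hw₁d s hs)
      rw [show (3:ℝ) * s ^ 2 * w₁ s + s ^ 3 * w₂ s = ((3:ℕ):ℝ) * s ^ (3 - 1) * w₁ s + s ^ 3 * w₂ s by norm_num]
      exact h
    convert h1 using 1
    rcases eq_or_lt_of_le hs.1 with h0 | h0
    · simp [hG, ← h0, hw₁0]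
    · have hsne : s ≠ 0 := ne_of_gt h0
      have he := hode s ⟨h0, hs.2⟩
      field_simp at he
      simp only [hG]
      nlinarith [he]
  have hg : ∀ s ∈ Icc (0:ℝ) 1, s ^ 3 * w₁ s = ∫ t in (0:ℝ)..s, G t := by
    intro s hs
    rw [ftc _ G hgd hGc s hs]
    norm_num [hw₁0]
  have hwint : ∀ s ∈ Icc (0:ℝ) 1, w s = ∫ t in (0:ℝ)..s, w₁ t := by
    intro s hs
    rw [ftc w w₁ hwd hw₁c s hs, hw0, sub_zero]
  -- main induction
  have key : ∀ n : ℕ, ∀ s ∈ Icc (0:ℝ) 1,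
      |w s| ≤ C * (M / 4) ^ n * s ^ (2 * n) / n.factorial := by
    intro n
    induction n with
    | zero => intro s hs; simpa using hC s hs
    | succ n ih =>
      -- bound on w₁
      have hw₁b : ∀ t ∈ Icc (0:ℝ) 1,
          |w₁ t| ≤ M * (C * (M / 4) ^ n / n.factorial) * t ^ (2 * n + 1) / (2 * n + 4) := by
        intro t ht
        rcases eq_or_lt_of_le ht.1 with h0 | h0
        · rw [← h0, hw₁0, abs_zero, zero_pow (by omega : 2 * n + 1 ≠ 0)]
          simp
        · have hsub : Icc (0:ℝ) t ⊆ Icc 0 1 := Icc_subset_Icc le_rfl ht.2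
          have hGint : IntervalIntegrable G MeasureTheory.volume 0 t :=
            (hGc.mono hsub).intervalIntegrable_of_Icc ht.1
          have habs : |∫ u in (0:ℝ)..t, G u| ≤ ∫ u in (0:ℝ)..t, |G u| :=
            intervalIntegral.abs_integral_le_integral_abs ht.1
          have hmono : (∫ u in (0:ℝ)..t, |G u|) ≤
              ∫ u in (0:ℝ)..t, M * (C * (M / 4) ^ n / n.factorial) * u ^ (2 * n + 3) := by
            apply intervalIntegral.integral_mono_on ht.1 hGint.abs
            · apply ContinuousOn.intervalIntegrable_of_Icc ht.1
              fun_prop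
            · intro u hu
              have hu1 : u ∈ Icc (0:ℝ) 1 := hsub hu
              have h1 : |G u| = u ^ 3 * (|Q u| * |w u|) := by
                rw [hG]
                simp only
                rw [abs_neg, abs_mul, abs_mul, abs_pow, abs_of_nonneg hu.1]
                ring
              rw [h1]
              have h2 : |Q u| * |w u| ≤ M * (C * (M / 4) ^ n * u ^ (2 * n) / n.factorial) :=
                mul_le_mul (hM u hu1) (ih u hu1) (abs_nonneg _) hM0
              calc u ^ 3 * (|Q u| * |w u|)
                  ≤ u ^ 3 * (M * (C * (M / 4) ^ n * u ^ (2 * n) / n.factorial)) :=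
                    mul_le_mul_of_nonneg_left h2 (pow_nonneg hu.1 3)
                _ = M * (C * (M / 4) ^ n / n.factorial) * u ^ (2 * n + 3) := by ring
          have hcomp : (∫ u in (0:ℝ)..t, M * (C * (M / 4) ^ n / n.factorial) * u ^ (2 * n + 3))
              = M * (C * (M / 4) ^ n / n.factorial) * (t ^ (2 * n + 4) / (2 * n + 4)) := by
            rw [intervalIntegral.integral_const_mul, integral_pow]
            rw [zero_pow (by omega : 2 * n + 3 + 1 ≠ 0)]
            push_cast
            ring_nf
          have hgt : |t ^ 3 * w₁ t| ≤
              M * (C * (M / 4) ^ n / n.factorial) * (t ^ (2 * n + 4) / (2 * n + 4)) := by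
            rw [hg t ht]
            exact le_trans habs (le_trans hmono (le_of_eq hcomp))
          rw [abs_mul, abs_pow, abs_of_nonneg h0.le] at hgt
          have ht3 : (0:ℝ) < t ^ 3 := by positivity
          rw [show (2 * n + 4) = (2 * n + 1) + 3 from by ring, pow_add] at hgt
          have hgt2 : t ^ 3 * |w₁ t| ≤
              t ^ 3 * (M * (C * (M / 4) ^ n / n.factorial) * t ^ (2 * n + 1) / (2 * n + 4)) := by
            refine le_trans hgt (le_of_eq ?_)
            ring
          exact le_of_mul_le_mul_left hgt2 ht3
      intro s hs
      have hsub : Icc (0:ℝ) s ⊆ Icc 0 1 := Icc_subset_Icc le_rfl hs.2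
      have hw₁int : IntervalIntegrable w₁ MeasureTheory.volume 0 s :=
        (hw₁c.mono hsub).intervalIntegrable_of_Icc hs.1
      have habs : |∫ t in (0:ℝ)..s, w₁ t| ≤ ∫ t in (0:ℝ)..s, |w₁ t| :=
        intervalIntegral.abs_integral_le_integral_abs hs.1
      have hmono : (∫ t in (0:ℝ)..s, |w₁ t|) ≤
          ∫ t in (0:ℝ)..s, M * (C * (M / 4) ^ n / n.factorial) / (2 * n + 4) * t ^ (2 * n + 1) := by
        apply intervalIntegral.integral_mono_on hs.1 hw₁int.abs
        · apply ContinuousOn.intervalIntegrable_of_Icc hs.1; fun_prop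
        · intro t ht
          calc |w₁ t| ≤ M * (C * (M / 4) ^ n / n.factorial) * t ^ (2 * n + 1) / (2 * n + 4) :=
              hw₁b t (hsub ht)
            _ = M * (C * (M / 4) ^ n / n.factorial) / (2 * n + 4) * t ^ (2 * n + 1) := by ring
      have hcomp : (∫ t in (0:ℝ)..s, M * (C * (M / 4) ^ n / n.factorial) / (2 * n + 4) * t ^ (2 * n + 1))
          = M * (C * (M / 4) ^ n / n.factorial) / (2 * n + 4) * (s ^ (2 * n + 2) / (2 * n + 2)) := by
        rw [intervalIntegral.integral_const_mul, integral_pow]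
        rw [zero_pow (by omega : 2 * n + 1 + 1 ≠ 0)]
        push_cast
        ring_nf
      have hws : |w s| ≤
          M * (C * (M / 4) ^ n / n.factorial) / (2 * n + 4) * (s ^ (2 * n + 2) / (2 * n + 2)) := by
        rw [hwint s hs]
        exact le_trans habs (le_trans hmono (le_of_eq hcomp))
      refine le_trans hws ?_
      have hfacpos : (0:ℝ) < n.factorial := by exact_mod_cast n.factorial_pos
      have hrhs : C * (M / 4) ^ (n + 1) / ((n + 1).factorial : ℝ)
          = M * (C * (M / 4) ^ n / n.factorial) / (4 * (n + 1)) := by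
        rw [pow_succ, Nat.factorial_succ]
        push_cast
        field_simp
      have hp : (0:ℝ) ≤ s ^ (2 * n + 2) := pow_nonneg hs.1 _
      have hnum : (0:ℝ) ≤ M * (C * (M / 4) ^ n / n.factorial) * s ^ (2 * n + 2) :=
        mul_nonneg (by positivity) hp
      have hinv : (((2 * (n:ℝ) + 4) * (2 * (n:ℝ) + 2))⁻¹ : ℝ) ≤ (4 * ((n:ℝ) + 1))⁻¹ := by
        apply inv_anti₀ (by positivity)
        nlinarith [Nat.cast_nonneg (α := ℝ) n]
      calc M * (C * (M / 4) ^ n / n.factorial) / (2 * n + 4) * (s ^ (2 * n + 2) / (2 * n + 2))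
          = M * (C * (M / 4) ^ n / n.factorial) * s ^ (2 * n + 2)
              * ((2 * (n:ℝ) + 4)⁻¹ * (2 * (n:ℝ) + 2)⁻¹) := by ring
        _ = M * (C * (M / 4) ^ n / n.factorial) * s ^ (2 * n + 2)
              * ((2 * (n:ℝ) + 4) * (2 * (n:ℝ) + 2))⁻¹ := by rw [mul_inv]
        _ ≤ M * (C * (M / 4) ^ n / n.factorial) * s ^ (2 * n + 2) * (4 * ((n:ℝ) + 1))⁻¹ :=
            mul_le_mul_of_nonneg_left hinv hnum
        _ = M * (C * (M / 4) ^ n / n.factorial) / (4 * ((n:ℝ) + 1)) * s ^ (2 * n + 2) := by ring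
        _ = C * (M / 4) ^ (n + 1) / ((n + 1).factorial : ℝ) * s ^ (2 * n + 2) := by
            rw [hrhs]
        _ = C * (M / 4) ^ (n + 1) * s ^ (2 * (n + 1)) / ((n + 1).factorial : ℝ) := by
            rw [show 2 * (n + 1) = 2 * n + 2 from by ring]; ring
  -- take the limit
  intro s hs
  have hle : ∀ n : ℕ, |w s| ≤ C * ((M / 4) ^ n / n.factorial) := by
    intro n
    refine le_trans (key n s hs) ?_
    have hs1 : s ^ (2 * n) ≤ 1 := pow_le_one₀ hs.1 hs.2
    calc C * (M / 4) ^ n * s ^ (2 * n) / n.factorial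
        ≤ C * (M / 4) ^ n * 1 / n.factorial := by gcongr
      _ = C * ((M / 4) ^ n / n.factorial) := by ring
  have hlim : Filter.Tendsto (fun n : ℕ => C * ((M / 4) ^ n / n.factorial))
      Filter.atTop (nhds 0) := by
    have := FloorSemiring.tendsto_pow_div_factorial_atTop (K := ℝ) (M / 4)
    simpa using this.const_mul C
  have : |w s| ≤ 0 := ge_of_tendsto' hlim hle
  exact abs_nonpos_iff.mp this

/-- Let `Q : [0,1] → ℝ` be Lipschitz and `β` the normalized regular solution
(`β(0) = 1`, `β'(0) = 0`) of `β'' + (3/s) β' + Q β = 0` on `(0, 1]`. Then any `C²([0,1])`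
solution `θ` of the same ODE with `θ'(0) = 0` satisfies `θ = θ(0) · β` on `[0, 1]`. -/
theorem regular_solutions_one_dimensional
    (Q : ℝ → ℝ) (hQ : ∃ K, LipschitzOnWith K Q (Icc 0 1))
    (β β₁ β₂ : ℝ → ℝ) (hβ : IsSingularLinearSol Q β β₁ β₂)
    (hβ0 : β 0 = 1) (hβ₁0 : β₁ 0 = 0)
    (θ θ₁ θ₂ : ℝ → ℝ) (hθ : IsSingularLinearSol Q θ θ₁ θ₂) (hθ₁0 : θ₁ 0 = 0) :
    ∀ s ∈ Icc (0:ℝ) 1, θ s = θ 0 * β s := by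
  obtain ⟨hβd, hβ₁d, hβ₂c, hβode⟩ := hβ
  obtain ⟨hθd, hθ₁d, hθ₂c, hθode⟩ := hθ
  have main := key_vanish Q hQ (fun s => θ s - θ 0 * β s) (fun s => θ₁ s - θ 0 * β₁ s)
    (fun s => θ₂ s - θ 0 * β₂ s)
    (fun s hs => (hθd s hs).sub ((hβd s hs).const_mul (θ 0)))
    (fun s hs => (hθ₁d s hs).sub ((hβ₁d s hs).const_mul (θ 0)))
    (fun s hs => by
      have h1 := hθode s hs
      have h2 := hβode s hs
      linear_combination h1 - θ 0 * h2)
    (by simp [hβ0]) (by simp [hθ₁0, hβ₁0])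
  intro s hs
  have h2 : θ s - θ 0 * β s = 0 := main s hs
  linarith
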